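/- Let v = (cos α₀, sin α₀) ∈ S¹ and let α : ℝ → (0, π) and β : ℝ → (π, 2π) be continuous with β − α bounded away from 0 and 2π. Define Ψ : ℝ² → ℝ³ by Ψ(λ, μ) = (λ e^{iα₀} + μ e^{i(α₀+α(λ))}, −μλ sin α(λ)) for μ ≥ 0 and Ψ(λ, μ) = (λ e^{iα₀} + |μ| e^{i(α₀+β(λ))}, −|μ|λ sin β(λ)) for μ ≤ 0 (identifying ℝ² ≅ ℂ for the first two coordinates). Then Ψ is continuous and injective. -/

import Mathlib

open Real

private lemma cancel_aux {s s' l l' m m' : ℝ} (hms : m * s ≠ 0)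
    (h1 : m * s = m' * s') (h2 : m * l * s = m' * l' * s') : l = l' := by
  have : (m * s) * l = (m * s) * l' := by linear_combination h2 - l' * h1
  exact mul_left_cancel₀ hms this

/-- the parametrization `Ψ` of the surface `Σ_{v,α}` is continuous and
injective. -/
theorem stmt_16 (α₀ : ℝ) (a b : ℝ → ℝ)
    (hacont : Continuous a) (hbcont : Continuous b)
    (ha : ∀ l, a l ∈ Set.Ioo (0 : ℝ) π)
    (hb : ∀ l, b l ∈ Set.Ioo π (2 * π))
    (hsep : ∃ c C : ℝ, 0 < c ∧ C < 2 * π ∧ ∀ l, c ≤ b l - a l ∧ b l - a l ≤ C)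
    (e : ℝ → ℝ × ℝ) (he : ∀ γ, e γ = (Real.cos γ, Real.sin γ))
    (Ψ : ℝ × ℝ → (ℝ × ℝ) × ℝ)
    (hΨpos : ∀ l m : ℝ, 0 ≤ m →
      Ψ (l, m) = (l • e α₀ + m • e (α₀ + a l), -(m * l * Real.sin (a l))))
    (hΨneg : ∀ l m : ℝ, m ≤ 0 →
      Ψ (l, m) = (l • e α₀ + |m| • e (α₀ + b l), -(|m| * l * Real.sin (b l)))) :
    Continuous Ψ ∧ Function.Injective Ψ := by
  simp only [he] at hΨpos hΨneg
  -- sin of a is positive, sin of b is negative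
  have hsa : ∀ l, 0 < Real.sin (a l) := fun l =>
    Real.sin_pos_of_pos_of_lt_pi (ha l).1 (ha l).2
  have hsb : ∀ l, Real.sin (b l) < 0 := by
    intro l
    have h1 : 0 < Real.sin (b l - π) :=
      Real.sin_pos_of_pos_of_lt_pi (by linarith [(hb l).1]) (by linarith [(hb l).2])
    have h2 : Real.sin (b l - π) = -Real.sin (b l) := Real.sin_sub_pi (b l)
    linarith
  -- the "J" linear functional extracting m * sin θ
  have keyJ : ∀ (l m θ : ℝ),
      -Real.sin α₀ * (l * Real.cos α₀ + m * Real.cos (α₀ + θ)) +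
        Real.cos α₀ * (l * Real.sin α₀ + m * Real.sin (α₀ + θ)) = m * Real.sin θ := by
    intro l m θ
    have h1 : Real.sin (α₀ + θ - α₀) =
        Real.sin (α₀ + θ) * Real.cos α₀ - Real.cos (α₀ + θ) * Real.sin α₀ :=
      Real.sin_sub _ _
    have h2 : α₀ + θ - α₀ = θ := by ring
    rw [h2] at h1
    linear_combination (-m) * h1
  -- the "I" linear functional extracting l + m * cos θ
  have keyI : ∀ (l m θ : ℝ),
      Real.cos α₀ * (l * Real.cos α₀ + m * Real.cos (α₀ + θ)) +
        Real.sin α₀ * (l * Real.sin α₀ + m * Real.sin (α₀ + θ)) = l + m * Real.cos θ := by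
    intro l m θ
    have h1 : Real.cos (α₀ + θ - α₀) =
        Real.cos (α₀ + θ) * Real.cos α₀ + Real.sin (α₀ + θ) * Real.sin α₀ :=
      Real.cos_sub _ _
    have h2 : α₀ + θ - α₀ = θ := by ring
    rw [h2] at h1
    linear_combination (-m) * h1 + l * (Real.sin_sq_add_cos_sq α₀)
  constructor
  · -- continuity
    have hΨeq : Ψ = fun p : ℝ × ℝ => if (0 : ℝ) ≤ p.2 then
        (p.1 • ((Real.cos α₀ : ℝ), Real.sin α₀) +
          p.2 • (Real.cos (α₀ + a p.1), Real.sin (α₀ + a p.1)),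
          -(p.2 * p.1 * Real.sin (a p.1)))
      else
        (p.1 • ((Real.cos α₀ : ℝ), Real.sin α₀) +
          (-p.2) • (Real.cos (α₀ + b p.1), Real.sin (α₀ + b p.1)),
          -((-p.2) * p.1 * Real.sin (b p.1))) := by
      funext p
      obtain ⟨l, m⟩ := p
      by_cases hm : (0 : ℝ) ≤ m
      · rw [if_pos hm]
        exact hΨpos l m hm
      · rw [if_neg hm]
        push_neg at hm
        rw [hΨneg l m hm.le, abs_of_neg hm]
    rw [hΨeq]
    apply Continuous.if_le
    · fun_prop
    · fun_prop
    · exact continuous_const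
    · exact continuous_snd
    · intro x hx
      simp [← hx]
  · -- injectivity
    intro p q h
    obtain ⟨l, m⟩ := p
    obtain ⟨l', m'⟩ := q
    rcases le_or_gt 0 m with hm | hm <;> rcases le_or_gt 0 m' with hm' | hm'
    · -- both nonneg
      rw [hΨpos l m hm, hΨpos l' m' hm'] at h
      simp only [Prod.mk.injEq, Prod.smul_mk, Prod.mk_add_mk, smul_eq_mul, neg_inj] at h
      obtain ⟨⟨hx, hy⟩, h3⟩ := h
      have hJ : m * Real.sin (a l) = m' * Real.sin (a l') := by
        rw [← keyJ l m (a l), ← keyJ l' m' (a l'), hx, hy]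
      have hI : l + m * Real.cos (a l) = l' + m' * Real.cos (a l') := by
        rw [← keyI l m (a l), ← keyI l' m' (a l'), hx, hy]
      rcases eq_or_lt_of_le hm with hm0 | hmpos
      · -- m = 0
        have hm0' : m = 0 := hm0.symm
        subst hm0'
        have : m' * Real.sin (a l') = 0 := by linarith
        have hm'0 : m' = 0 := by
          rcases mul_eq_zero.mp this with h' | h'
          · exact h'
          · exact absurd h' (ne_of_gt (hsa l'))
        subst hm'0
        simp at hI
        simp [hI]
      · -- m > 0
        have hmne : m * Real.sin (a l) ≠ 0 := ne_of_gt (mul_pos hmpos (hsa l))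
        have hll : l = l' := cancel_aux hmne hJ h3
        subst hll
        have : m = m' := by
          have := hJ
          rw [mul_eq_mul_right_iff] at this
          rcases this with h' | h'
          · exact h'
          · exact absurd h' (ne_of_gt (hsa l))
        simp [this]
    · -- m nonneg, m' neg : contradiction
      rw [hΨpos l m hm, hΨneg l' m' hm'.le] at h
      simp only [Prod.mk.injEq, Prod.smul_mk, Prod.mk_add_mk, smul_eq_mul, neg_inj,
        abs_of_neg hm'] at h
      obtain ⟨⟨hx, hy⟩, h3⟩ := h
      have hJ : m * Real.sin (a l) = (-m') * Real.sin (b l') := by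
        rw [← keyJ l m (a l), ← keyJ l' (-m') (b l'), hx, hy]
      have h1 : 0 ≤ m * Real.sin (a l) := mul_nonneg hm (hsa l).le
      have h2 : (-m') * Real.sin (b l') < 0 :=
        mul_neg_of_pos_of_neg (by linarith) (hsb l')
      linarith
    · -- m neg, m' nonneg : contradiction
      rw [hΨneg l m hm.le, hΨpos l' m' hm'] at h
      simp only [Prod.mk.injEq, Prod.smul_mk, Prod.mk_add_mk, smul_eq_mul, neg_inj,
        abs_of_neg hm] at h
      obtain ⟨⟨hx, hy⟩, h3⟩ := h
      have hJ : (-m) * Real.sin (b l) = m' * Real.sin (a l') := by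
        rw [← keyJ l (-m) (b l), ← keyJ l' m' (a l'), hx, hy]
      have h1 : 0 ≤ m' * Real.sin (a l') := mul_nonneg hm' (hsa l').le
      have h2 : (-m) * Real.sin (b l) < 0 :=
        mul_neg_of_pos_of_neg (by linarith) (hsb l)
      linarith
    · -- both neg
      rw [hΨneg l m hm.le, hΨneg l' m' hm'.le] at h
      simp only [Prod.mk.injEq, Prod.smul_mk, Prod.mk_add_mk, smul_eq_mul, neg_inj,
        abs_of_neg hm, abs_of_neg hm'] at h
      obtain ⟨⟨hx, hy⟩, h3⟩ := h
      have hJ : (-m) * Real.sin (b l) = (-m') * Real.sin (b l') := by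
        rw [← keyJ l (-m) (b l), ← keyJ l' (-m') (b l'), hx, hy]
      have hmne : (-m) * Real.sin (b l) ≠ 0 :=
        ne_of_lt (mul_neg_of_pos_of_neg (by linarith) (hsb l))
      have hll : l = l' := cancel_aux hmne hJ h3
      subst hll
      have : m = m' := by
        have hs : Real.sin (b l) ≠ 0 := ne_of_lt (hsb l)
        have := hJ
        rw [mul_eq_mul_right_iff, neg_inj] at this
        rcases this with h' | h'
        · exact h'
        · exact absurd h' hs
      simp [this]
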